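/- Let k be a positive integer, let H be the dihedral arrangement I₂(k) of k equally spaced lines through the origin in ℝ², with sectors T₀,…,T_{2k−1} in cyclic order, and let p be a positive divisor of k with p < k. Let K be the closed disc B(0,ρ) and let a ∈ ℝ² with ‖a‖ ≤ ρ. Then for every 0 ≤ r ≤ p−1, Σ_{i=0}^{2k/p − 1} Area(T_{r+pi} ∩ (K + a)) = Area(K)/p = πρ²/p. -/

import Mathlib

open MeasureTheory Metric Real

noncomputable section

/-- The `j`-th open sector of the dihedral arrangement `I₂(k)` of `k` equally spaced lines
through the origin of `ℝ²`: the points with polar angle strictly between `jπ/k` and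
`(j+1)π/k`.  The sectors `T₀, …, T_{2k−1}` are in cyclic order. -/
def sector (k j : ℕ) : Set (EuclideanSpace ℝ (Fin 2)) :=
  {x | ∃ ρ θ : ℝ, 0 < ρ ∧ (j : ℝ) * π / k < θ ∧ θ < ((j : ℝ) + 1) * π / k ∧
    x = ρ • (WithLp.toLp 2 ![Real.cos θ, Real.sin θ] : EuclideanSpace ℝ (Fin 2))}

open Set

namespace PizzaAux

/-- angular coefficient -/
def cfun (b : ℂ) (θ : ℝ) : ℝ := b.re * Real.cos θ + b.im * Real.sin θ

/-- distance from the origin to the boundary of the disc of radius `ρ` centered at `b`,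
in the direction `θ`. -/
def tfun (b : ℂ) (ρ θ : ℝ) : ℝ :=
  cfun b θ + Real.sqrt (ρ ^ 2 - ‖b‖ ^ 2 + cfun b θ ^ 2)

/-- open wedge in `ℂ` of directions strictly between `α` and `β`. -/
def cW (α β : ℝ) : Set ℂ :=
  {z | ∃ r θ : ℝ, 0 < r ∧ α < θ ∧ θ < β ∧ z = r * Complex.exp (θ * Complex.I)}

lemma cfun_sq_le (b : ℂ) (θ : ℝ) : cfun b θ ^ 2 ≤ ‖b‖ ^ 2 := by
  have h := Real.sin_sq_add_cos_sq θ
  have h2 : ‖b‖ ^ 2 = b.re * b.re + b.im * b.im := by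
    rw [Complex.sq_norm, Complex.normSq_apply]
  rw [h2]
  unfold cfun
  nlinarith [sq_nonneg (b.re * Real.sin θ - b.im * Real.cos θ)]

lemma disc_nonneg {b : ℂ} {ρ : ℝ} (hb : ‖b‖ ≤ ρ) (θ : ℝ) :
    0 ≤ ρ ^ 2 - ‖b‖ ^ 2 + cfun b θ ^ 2 := by
  have h1 : ‖b‖ ^ 2 ≤ ρ ^ 2 :=
    pow_le_pow_left₀ (norm_nonneg b) hb 2
  nlinarith [sq_nonneg (cfun b θ)]

lemma tfun_nonneg {b : ℂ} {ρ : ℝ} (hb : ‖b‖ ≤ ρ) (θ : ℝ) :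
    0 ≤ tfun b ρ θ := by
  unfold tfun
  have h1 : |cfun b θ| ≤ Real.sqrt (ρ ^ 2 - ‖b‖ ^ 2 + cfun b θ ^ 2) := by
    rw [← Real.sqrt_sq_eq_abs]
    apply Real.sqrt_le_sqrt
    nlinarith [pow_le_pow_left₀ (norm_nonneg b) hb 2]
  have := neg_abs_le (cfun b θ)
  linarith


lemma mem_closedBall_iff {b : ℂ} {ρ : ℝ} (hb : ‖b‖ ≤ ρ) {r θ : ℝ} (hr : 0 < r) :
    (r : ℂ) * Complex.exp (θ * Complex.I) ∈ closedBall b ρ ↔ r ≤ tfun b ρ θ := by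
  have hρ : 0 ≤ ρ := (norm_nonneg b).trans hb
  set c := cfun b θ with hc
  set D := ρ ^ 2 - ‖b‖ ^ 2 + c ^ 2 with hD
  have hD0 : 0 ≤ D := disc_nonneg hb θ
  have habs2 : ‖b‖ ^ 2 = b.re * b.re + b.im * b.im := by
    rw [Complex.sq_norm, Complex.normSq_apply]
  have hpyth := Real.sin_sq_add_cos_sq θ
  have key : ((r : ℂ) * Complex.exp (θ * Complex.I) ∈ closedBall b ρ) ↔
      (r - c) ^ 2 ≤ D := by
    rw [mem_closedBall, Complex.dist_eq, ← Real.sqrt_sq hρ, Complex.norm_def,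
      Real.sqrt_le_sqrt_iff (by positivity)]
    have hre : ((r : ℂ) * Complex.exp (θ * Complex.I) - b).re = r * Real.cos θ - b.re := by
      simp [Complex.exp_mul_I, Complex.sub_re, Complex.mul_re, Complex.add_re,
        Complex.cos_ofReal_re, Complex.sin_ofReal_im, Complex.mul_im, Complex.I_re, Complex.I_im,
        Complex.cos_ofReal_im, Complex.sin_ofReal_re]
    have him : ((r : ℂ) * Complex.exp (θ * Complex.I) - b).im = r * Real.sin θ - b.im := by
      simp [Complex.exp_mul_I, Complex.sub_im, Complex.mul_im, Complex.add_im,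
        Complex.cos_ofReal_re, Complex.sin_ofReal_im, Complex.mul_re, Complex.I_re, Complex.I_im,
        Complex.cos_ofReal_im, Complex.sin_ofReal_re]
    rw [Complex.normSq_apply, hre, him]
    have hiden : (r * Real.cos θ - b.re) * (r * Real.cos θ - b.re)
        + (r * Real.sin θ - b.im) * (r * Real.sin θ - b.im)
        = (r - c) ^ 2 - c ^ 2 + (b.re * b.re + b.im * b.im) := by
      rw [hc]; unfold cfun
      linear_combination (r ^ 2) * hpyth
    rw [hiden, hD, habs2]
    constructor <;> intro h <;> linarith
  rw [key]
  have hsq : Real.sqrt D ^ 2 = D := Real.sq_sqrt hD0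
  have hcs : |c| ≤ Real.sqrt D := by
    rw [← Real.sqrt_sq_eq_abs]
    apply Real.sqrt_le_sqrt
    nlinarith [pow_le_pow_left₀ (norm_nonneg b) hb 2]
  constructor
  · intro h
    have hrc : r - c ≤ Real.sqrt D := by
      rcases le_or_gt (r - c) 0 with h' | h'
      · exact h'.trans (Real.sqrt_nonneg D)
      · rw [← Real.sqrt_sq h'.le]; exact Real.sqrt_le_sqrt h
    unfold tfun; rw [← hc, ← hD]; linarith
  · intro h
    unfold tfun at h; rw [← hc, ← hD] at h
    have h1 : r - c ≤ Real.sqrt D := by linarith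
    have h2 : -(Real.sqrt D) ≤ r - c := by
      have := le_abs_self c
      linarith
    nlinarith

lemma cW_eq {α β : ℝ} (hα : -π < α) (hβ : β ≤ π) :
    cW α β = {z : ℂ | z ≠ 0 ∧ z.arg ∈ Ioo α β} := by
  ext z
  constructor
  · rintro ⟨r, θ, hr, h1, h2, rfl⟩
    have hθ : θ ∈ Ioc (-π) π := ⟨hα.trans h1, h2.le.trans hβ⟩
    have harg : ((r : ℂ) * Complex.exp (θ * Complex.I)).arg = θ := by
      rw [Complex.arg_real_mul _ hr, Complex.exp_mul_I, Complex.arg_cos_add_sin_mul_I hθ]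
    refine ⟨?_, ?_⟩
    · simp only [ne_eq, mul_eq_zero, Complex.ofReal_eq_zero, not_or]
      exact ⟨hr.ne', Complex.exp_ne_zero _⟩
    · rw [harg]; exact ⟨h1, h2⟩
  · rintro ⟨hz, h1, h2⟩
    exact ⟨‖z‖, z.arg, norm_pos_iff.mpr hz, h1, h2,
      (Complex.norm_mul_exp_arg_mul_I z).symm⟩

lemma measurableSet_cW' {α β : ℝ} (hα : -π < α) (hβ : β ≤ π) :
    MeasurableSet (cW α β) := by
  rw [cW_eq hα hβ]
  exact (MeasurableSet.compl (measurableSet_singleton 0)).inter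
    (Complex.measurable_arg (measurableSet_Ioo))

lemma mem_cW_rotate {α β : ℝ} (γ : ℝ) {z : ℂ} :
    z ∈ cW α β ↔ Complex.exp ((γ : ℝ) * Complex.I) * z ∈ cW (α + γ) (β + γ) := by
  have key : ∀ (δ θ : ℝ) (r : ℝ), Complex.exp ((δ:ℝ) * Complex.I) * ((r:ℂ) * Complex.exp ((θ:ℝ) * Complex.I))
      = (r : ℂ) * Complex.exp (((θ + δ : ℝ)) * Complex.I) := by
    intro δ θ r
    have : ((θ + δ : ℝ) : ℂ) * Complex.I = θ * Complex.I + δ * Complex.I := by push_cast; ring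
    rw [this, Complex.exp_add]; ring
  constructor
  · rintro ⟨r, θ, hr, h1, h2, rfl⟩
    exact ⟨r, θ + γ, hr, by linarith, by linarith, (key γ θ r)⟩
  · rintro ⟨r, θ, hr, h1, h2, hz⟩
    refine ⟨r, θ - γ, hr, by linarith, by linarith, ?_⟩
    have h0 : Complex.exp ((-γ : ℝ) * Complex.I) * (Complex.exp ((γ:ℝ) * Complex.I) * z) = z := by
      rw [← mul_assoc, ← Complex.exp_add]
      have : ((-γ : ℝ) : ℂ) * Complex.I + (γ:ℝ) * Complex.I = 0 := by push_cast; ring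
      rw [this, Complex.exp_zero, one_mul]
    rw [← h0, hz, key]
    norm_num
    exact Or.inl (by congr 1)

lemma cfun_rotate (b : ℂ) (γ θ : ℝ) :
    cfun (Complex.exp ((-γ : ℝ) * Complex.I) * b) (θ - γ) = cfun b θ := by
  unfold cfun
  rw [Complex.mul_re, Complex.mul_im, Complex.exp_ofReal_mul_I_re, Complex.exp_ofReal_mul_I_im,
    Real.cos_neg, Real.sin_neg, Real.cos_sub, Real.sin_sub]
  linear_combination (b.re * Real.cos θ + b.im * Real.sin θ) * Real.sin_sq_add_cos_sq γ

lemma abs_rotate (b : ℂ) (γ : ℝ) :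
    ‖Complex.exp ((γ:ℝ) * Complex.I) * b‖ = ‖b‖ := by
  rw [norm_mul, Complex.norm_exp_ofReal_mul_I, one_mul]

lemma tfun_rotate (b : ℂ) (ρ γ θ : ℝ) :
    tfun (Complex.exp ((-γ : ℝ) * Complex.I) * b) ρ (θ - γ) = tfun b ρ θ := by
  unfold tfun
  rw [cfun_rotate, abs_rotate]

lemma continuous_tfun (b : ℂ) (ρ : ℝ) : Continuous (tfun b ρ) := by
  have hc : Continuous (cfun b) :=
    ((continuous_const.mul Real.continuous_cos).add (continuous_const.mul Real.continuous_sin))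
  exact hc.add ((continuous_const.add (hc.pow 2)).sqrt)

lemma volume_cW_inter_closedBall_core {α β : ℝ} (hα : -π < α) (hβ : β < π) (hαβ : α ≤ β)
    {b : ℂ} {ρ : ℝ} (hb : ‖b‖ ≤ ρ) :
    volume (cW α β ∩ closedBall b ρ)
      = ENNReal.ofReal (∫ θ in α..β, tfun b ρ θ ^ 2 / 2) := by
  have ht := continuous_tfun b ρ
  set t := tfun b ρ with htdef
  set A : Set (ℝ × ℝ) := {p : ℝ × ℝ | (α < p.2 ∧ p.2 < β) ∧ 0 < p.1 ∧ p.1 ≤ t p.2} with hAdef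
  have hA : MeasurableSet A := by
    have h1 : MeasurableSet ((fun p : ℝ × ℝ => p.2) ⁻¹' Ioo α β) :=
      measurable_snd measurableSet_Ioo
    have h2 : MeasurableSet ((fun p : ℝ × ℝ => p.1) ⁻¹' Ioi (0:ℝ)) :=
      measurable_fst measurableSet_Ioi
    have h3 : MeasurableSet {p : ℝ × ℝ | p.1 ≤ t p.2} :=
      measurableSet_le measurable_fst (ht.measurable.comp measurable_snd)
    have hA' : A = ((fun p : ℝ × ℝ => p.2) ⁻¹' Ioo α β)
        ∩ (((fun p : ℝ × ℝ => p.1) ⁻¹' Ioi (0:ℝ)) ∩ {p : ℝ × ℝ | p.1 ≤ t p.2}) := by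
      ext p
      simp only [hAdef, Set.mem_setOf_eq, Set.mem_inter_iff, Set.mem_preimage, Set.mem_Ioo,
        Set.mem_Ioi]
    rw [hA']
    exact h1.inter (h2.inter h3)
  have hAsub : A ⊆ polarCoord.target := by
    rintro ⟨r, θ⟩ ⟨⟨h1, h2⟩, h3, _⟩
    exact ⟨h3, hα.trans h1, h2.trans hβ⟩
  have polar_point : ∀ r θ : ℝ, Complex.measurableEquivRealProd.symm (polarCoord.symm (r, θ))
      = (r : ℂ) * Complex.exp ((θ:ℝ) * Complex.I) := by
    intro r θ
    rw [Complex.measurableEquivRealProd_symm_apply, Complex.exp_mul_I]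
    apply Complex.ext <;>
      simp [polarCoord_symm_apply, Complex.mul_re, Complex.mul_im, Complex.add_re,
        Complex.add_im, Complex.cos_ofReal_re, Complex.sin_ofReal_re, Complex.cos_ofReal_im,
        Complex.sin_ofReal_im, Complex.I_re, Complex.I_im]
  -- the image description
  have hS : cW α β ∩ closedBall b ρ
      = Complex.measurableEquivRealProd.symm '' (polarCoord.symm '' A) := by
    rw [Set.image_image]
    ext z
    constructor
    · rintro ⟨⟨r, θ, hr, h1, h2, rfl⟩, hball⟩
      exact ⟨(r, θ), ⟨⟨h1, h2⟩, hr, (mem_closedBall_iff hb hr).mp hball⟩, polar_point r θ⟩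
    · rintro ⟨⟨r, θ⟩, ⟨⟨h1, h2⟩, h3, h4⟩, rfl⟩
      show Complex.measurableEquivRealProd.symm (polarCoord.symm (r, θ))
        ∈ cW α β ∩ closedBall b ρ
      rw [polar_point]
      exact ⟨⟨r, θ, h3, h1, h2, rfl⟩, (mem_closedBall_iff hb h3).mpr h4⟩
  have hSmeas : MeasurableSet (cW α β ∩ closedBall b ρ) :=
    (measurableSet_cW' hα hβ.le).inter measurableSet_closedBall
  -- transfer to ℝ × ℝ
  set B : Set (ℝ × ℝ) := polarCoord.symm '' A with hBdef
  have hSB : cW α β ∩ closedBall b ρ = Complex.measurableEquivRealProd ⁻¹' B := by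
    rw [hS, MeasurableEquiv.image_eq_preimage_symm, MeasurableEquiv.symm_symm]
  have hBmeas : MeasurableSet B := by
    have : B = Complex.measurableEquivRealProd.symm ⁻¹' (cW α β ∩ closedBall b ρ) := by
      rw [hSB]
      ext p
      simp
    rw [this]
    exact Complex.measurableEquivRealProd.symm.measurable hSmeas
  have step1 : volume (cW α β ∩ closedBall b ρ) = volume B := by
    rw [hSB]
    exact Complex.volume_preserving_equiv_real_prod.measure_preimage hBmeas.nullMeasurableSet
  -- change of variables
  have step2 : volume B = ∫⁻ p in A, ENNReal.ofReal p.1 := by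
    set Bmat : ℝ × ℝ → ℝ × ℝ →L[ℝ] ℝ × ℝ := fun p =>
      LinearMap.toContinuousLinearMap (Matrix.toLin (Module.Basis.finTwoProd ℝ) (Module.Basis.finTwoProd ℝ)
        !![Real.cos p.2, -p.1 * Real.sin p.2; Real.sin p.2, p.1 * Real.cos p.2]) with hBmat
    have hder : ∀ p ∈ A, HasFDerivWithinAt polarCoord.symm (Bmat p) A p := fun p _ =>
      (hasFDerivAt_polarCoord_symm p).hasFDerivWithinAt
    have hinj : Set.InjOn polarCoord.symm A := by
      have h := polarCoord.symm.injOn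
      rw [OpenPartialHomeomorph.symm_source] at h
      exact h.mono hAsub
    rw [hBdef, ← MeasureTheory.lintegral_abs_det_fderiv_eq_addHaar_image volume hA hder hinj]
    apply setLIntegral_congr_fun hA
    rintro ⟨r, θ⟩ hp
    have hdet : (Bmat (r, θ)).det = r := by
      have hpyth := Real.sin_sq_add_cos_sq θ
      simp only [hBmat, LinearMap.det_toContinuousLinearMap, LinearMap.det_toLin,
        Matrix.det_fin_two_of]
      linear_combination r * hpyth
    beta_reduce
    rw [hdet, abs_of_pos hp.2.1]
  -- Fubini
  have hnn : ∀ θ, 0 ≤ t θ ^ 2 / 2 := fun θ => by positivity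
  have step3 : (∫⁻ p in A, ENNReal.ofReal p.1)
      = ∫⁻ θ in Ioo α β, ENNReal.ofReal (t θ ^ 2 / 2) := by
    rw [← lintegral_indicator hA]
    rw [Measure.volume_eq_prod,
      lintegral_prod_symm _ ((measurable_fst.ennreal_ofReal.indicator hA).aemeasurable)]
    have inner : ∀ θ : ℝ, (∫⁻ r, (A.indicator fun p : ℝ × ℝ => ENNReal.ofReal p.1) (r, θ))
        = (Ioo α β).indicator (fun θ => ENNReal.ofReal (t θ ^ 2 / 2)) θ := by
      intro θ
      by_cases hθ : θ ∈ Ioo α β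
      · rw [Set.indicator_of_mem hθ]
        have ht0 : 0 ≤ t θ := tfun_nonneg hb θ
        have hfun : ∀ r : ℝ, (A.indicator fun p : ℝ × ℝ => ENNReal.ofReal p.1) (r, θ)
            = (Ioc (0:ℝ) (t θ)).indicator (fun r => ENNReal.ofReal r) r := by
          intro r
          by_cases hr : r ∈ Ioc (0:ℝ) (t θ)
          · rw [Set.indicator_of_mem hr,
              Set.indicator_of_mem (show (r, θ) ∈ A from ⟨⟨hθ.1, hθ.2⟩, hr.1, hr.2⟩)]
          · rw [Set.indicator_of_notMem hr, Set.indicator_of_notMem]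
            rintro ⟨-, h3, h4⟩
            exact hr ⟨h3, h4⟩
        simp_rw [hfun]
        rw [lintegral_indicator measurableSet_Ioc]
        have hint : IntegrableOn (fun x : ℝ => x) (Ioc (0:ℝ) (t θ)) volume :=
          continuous_id.integrableOn_Ioc
        rw [← ofReal_integral_eq_lintegral_ofReal hint
          ((ae_restrict_iff' measurableSet_Ioc).2 (ae_of_all _ fun x hx => hx.1.le))]
        congr 1
        rw [← intervalIntegral.integral_of_le ht0, integral_id]
        norm_num
      · rw [Set.indicator_of_notMem hθ]
        have hfun : ∀ r : ℝ, (A.indicator fun p : ℝ × ℝ => ENNReal.ofReal p.1) (r, θ) = 0 := by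
          intro r
          apply Set.indicator_of_notMem
          rintro ⟨⟨h1, h2⟩, -⟩
          exact hθ ⟨h1, h2⟩
        simp_rw [hfun]
        exact lintegral_zero
    simp_rw [inner]
    rw [lintegral_indicator measurableSet_Ioo]
  have step4 : (∫⁻ θ in Ioo α β, ENNReal.ofReal (t θ ^ 2 / 2))
      = ENNReal.ofReal (∫ θ in α..β, t θ ^ 2 / 2) := by
    rw [Measure.restrict_congr_set Ioo_ae_eq_Ioc]
    have hint : IntegrableOn (fun θ : ℝ => t θ ^ 2 / 2) (Ioc α β) volume :=
      ((ht.pow 2).div_const 2).integrableOn_Ioc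
    rw [← ofReal_integral_eq_lintegral_ofReal hint
      ((ae_restrict_iff' measurableSet_Ioc).2 (ae_of_all _ fun x _ => hnn x))]
    rw [intervalIntegral.integral_of_le hαβ]
  rw [step1, step2, step3, step4]

lemma measurableSet_cW {α β : ℝ} (h : β - α ≤ π) : MeasurableSet (cW α β) := by
  rcases le_or_gt β α with hle | hlt
  · have : cW α β = ∅ := by
      ext z
      simp only [cW, Set.mem_setOf_eq, Set.mem_empty_iff_false, iff_false]
      rintro ⟨r, θ, hr, h1, h2, rfl⟩
      linarith
    rw [this]
    exact MeasurableSet.empty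
  · set γ : ℝ := -(α + β) / 2 with hγ
    have hrot : cW α β = (fun z => Complex.exp ((γ:ℝ) * Complex.I) * z) ⁻¹' cW (α + γ) (β + γ) := by
      ext z
      exact mem_cW_rotate γ
    rw [hrot]
    have hπ := Real.pi_pos
    exact (measurable_id.const_mul _) (measurableSet_cW' (by rw [hγ]; linarith) (by rw [hγ]; linarith))

lemma toReal_volume_cW_inter_closedBall {α β : ℝ} (hαβ : α < β) (hw : β - α ≤ π / 2)
    {b : ℂ} {ρ : ℝ} (hb : ‖b‖ ≤ ρ) :
    (volume (cW α β ∩ closedBall b ρ)).toReal = ∫ θ in α..β, tfun b ρ θ ^ 2 / 2 := by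
  have hπ := Real.pi_pos
  set γ : ℝ := (α + β) / 2 with hγ
  set b' : ℂ := Complex.exp ((-γ : ℝ) * Complex.I) * b with hb'
  have hb'le : ‖b'‖ ≤ ρ := by
    rw [hb', abs_rotate b (-γ)]
    exact hb
  have hset : cW α β ∩ closedBall b ρ
      = (fun z => Complex.exp ((-γ : ℝ) * Complex.I) * z) ⁻¹' (cW (α + -γ) (β + -γ) ∩ closedBall b' ρ) := by
    ext z
    simp only [Set.mem_inter_iff, Set.mem_preimage]
    constructor
    · rintro ⟨h1, h2⟩
      refine ⟨(mem_cW_rotate (-γ)).mp h1, ?_⟩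
      rw [mem_closedBall] at h2 ⊢
      rw [hb', Complex.dist_eq]
      calc ‖Complex.exp ((-γ:ℝ) * Complex.I) * z - Complex.exp ((-γ:ℝ) * Complex.I) * b‖
          = ‖Complex.exp ((-γ:ℝ) * Complex.I) * (z - b)‖ := by ring_nf
        _ = ‖z - b‖ := abs_rotate (z - b) (-γ)
        _ ≤ ρ := by rwa [Complex.dist_eq] at h2
    · rintro ⟨h1, h2⟩
      refine ⟨(mem_cW_rotate (-γ)).mpr h1, ?_⟩
      rw [mem_closedBall] at h2 ⊢
      rw [hb', Complex.dist_eq] at h2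
      calc dist z b = ‖z - b‖ := Complex.dist_eq z b
        _ = ‖Complex.exp ((-γ:ℝ) * Complex.I) * (z - b)‖ :=
            (abs_rotate (z - b) (-γ)).symm
        _ ≤ ρ := by
            rw [show Complex.exp ((-γ:ℝ) * Complex.I) * (z - b)
              = Complex.exp ((-γ:ℝ) * Complex.I) * z - Complex.exp ((-γ:ℝ) * Complex.I) * b by ring]
            exact h2
  -- rotation by a fixed complex number of modulus one preserves volume
  have hrotmp : MeasurePreserving (fun z : ℂ => Complex.exp ((-γ : ℝ) * Complex.I) * z)
      volume volume := by
    have h1 : (fun z : ℂ => Complex.exp ((-γ : ℝ) * Complex.I) * z)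
        = ⇑(rotation (Circle.exp (-γ))) := by
      funext z
      rw [rotation_apply, Circle.coe_exp]
    rw [h1]
    exact (rotation (Circle.exp (-γ))).measurePreserving
  have hmeasT : MeasurableSet (cW (α + -γ) (β + -γ) ∩ closedBall b' ρ) :=
    (measurableSet_cW (by linarith)).inter measurableSet_closedBall
  rw [hset, hrotmp.measure_preimage hmeasT.nullMeasurableSet]
  have hcore := volume_cW_inter_closedBall_core (α := α + -γ) (β := β + -γ)
    (by rw [hγ]; linarith) (by rw [hγ]; linarith) (by linarith) hb'le
  rw [hcore, ENNReal.toReal_ofReal]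
  · have hfun : ∀ θ : ℝ, tfun b' ρ θ ^ 2 / 2 = tfun b ρ (θ + γ) ^ 2 / 2 := by
      intro θ
      have := tfun_rotate b ρ γ (θ + γ)
      rw [show θ + γ - γ = θ by ring] at this
      rw [hb', this]
    have h1 : (∫ θ in (α + -γ)..(β + -γ), tfun b' ρ θ ^ 2 / 2)
        = ∫ θ in (α + -γ)..(β + -γ), tfun b ρ (θ + γ) ^ 2 / 2 := by
      simp_rw [hfun]
    rw [h1, intervalIntegral.integral_comp_add_right (fun θ => tfun b ρ θ ^ 2 / 2) γ,
      show α + -γ + γ = α by ring, show β + -γ + γ = β by ring]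
  · apply intervalIntegral.integral_nonneg (by linarith)
    intro u _
    positivity

lemma tfun_sq_add_antipodal {b : ℂ} {ρ : ℝ} (hb : ‖b‖ ≤ ρ) (θ : ℝ) :
    tfun b ρ θ ^ 2 + tfun b ρ (θ + π) ^ 2
      = 2 * ρ ^ 2 - 2 * ‖b‖ ^ 2 + 4 * cfun b θ ^ 2 := by
  have hc : cfun b (θ + π) = -cfun b θ := by
    unfold cfun
    rw [Real.cos_add_pi, Real.sin_add_pi]
    ring
  have hD0 := disc_nonneg hb θ
  have hsq := Real.sq_sqrt hD0
  unfold tfun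
  rw [hc, show ρ ^ 2 - ‖b‖ ^ 2 + (-cfun b θ) ^ 2
    = ρ ^ 2 - ‖b‖ ^ 2 + cfun b θ ^ 2 by ring]
  linear_combination 2 * hsq

lemma sum_exp_eq_zero {m : ℕ} (hm : 2 ≤ m) (x : ℝ) :
    ∑ i ∈ Finset.range m, Complex.exp (((x + i * (2 * π / m) : ℝ)) * Complex.I) = 0 := by
  have hπ := Real.pi_pos
  have hm0 : (m : ℝ) ≠ 0 := by positivity
  have hm2 : (2 : ℝ) ≤ (m : ℝ) := by exact_mod_cast hm
  set z : ℂ := Complex.exp (((2 * π / m : ℝ)) * Complex.I) with hz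
  have hfact : ∀ i : ℕ, Complex.exp (((x + i * (2 * π / m) : ℝ)) * Complex.I)
      = Complex.exp ((x : ℝ) * Complex.I) * z ^ i := by
    intro i
    rw [hz, ← Complex.exp_nat_mul, ← Complex.exp_add]
    congr 1
    push_cast
    ring
  simp_rw [hfact]
  rw [← Finset.mul_sum]
  have hzne : z ≠ 1 := by
    intro hone
    rw [hz, Complex.exp_eq_one_iff] at hone
    obtain ⟨n, hn⟩ := hone
    have hI : (((2 * π / m : ℝ)) : ℂ) = (n : ℂ) * (2 * (π : ℝ)) := by
      apply mul_right_cancel₀ Complex.I_ne_zero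
      rw [hn]
      ring
    have hr : (2 * π / m : ℝ) = (n : ℝ) * (2 * π) := by exact_mod_cast hI
    have h1 : 0 < 2 * π / (m : ℝ) := by positivity
    have h2 : 2 * π / (m : ℝ) ≤ π := by
      rw [div_le_iff₀ (by positivity)]
      nlinarith
    rcases le_or_gt (n : ℝ) 0 with hn0 | hn0
    · nlinarith
    · have : (1 : ℝ) ≤ (n : ℝ) := by
        have : (0 : ℤ) < n := by exact_mod_cast hn0
        exact_mod_cast this
      nlinarith
  have hzm : z ^ m = 1 := by
    rw [hz, ← Complex.exp_nat_mul]
    have hmc : (m : ℂ) ≠ 0 := by exact_mod_cast hm0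
    have : (m : ℂ) * (((2 * π / m : ℝ)) * Complex.I) = 2 * (π : ℝ) * Complex.I := by
      push_cast
      field_simp
    rw [this]
    exact_mod_cast Complex.exp_two_pi_mul_I
  rw [geom_sum_eq hzne, hzm]
  simp

lemma sum_cos_eq_zero {m : ℕ} (hm : 2 ≤ m) (x : ℝ) :
    ∑ i ∈ Finset.range m, Real.cos (x + i * (2 * π / m)) = 0 := by
  have h := congrArg Complex.re (sum_exp_eq_zero hm x)
  rw [Complex.re_sum, Complex.zero_re] at h
  rw [← h]
  exact Finset.sum_congr rfl fun i _ => (Complex.exp_ofReal_mul_I_re _).symm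

lemma sum_sin_eq_zero {m : ℕ} (hm : 2 ≤ m) (x : ℝ) :
    ∑ i ∈ Finset.range m, Real.sin (x + i * (2 * π / m)) = 0 := by
  have h := congrArg Complex.im (sum_exp_eq_zero hm x)
  rw [Complex.im_sum, Complex.zero_im] at h
  rw [← h]
  exact Finset.sum_congr rfl fun i _ => (Complex.exp_ofReal_mul_I_im _).symm

/-- The isometry from the Euclidean plane to `ℂ`. -/
def planeEquiv : EuclideanSpace ℝ (Fin 2) ≃ₗᵢ[ℝ] ℂ := Complex.orthonormalBasisOneI.repr.symm

lemma planeEquiv_smul_vec (r θ : ℝ) :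
    planeEquiv (r • (WithLp.toLp 2 ![Real.cos θ, Real.sin θ] : EuclideanSpace ℝ (Fin 2)))
      = (r : ℂ) * Complex.exp ((θ : ℝ) * Complex.I) := by
  unfold planeEquiv
  rw [LinearIsometryEquiv.map_smul, Complex.orthonormalBasisOneI_repr_symm_apply]
  have h0 : (WithLp.toLp 2 ![Real.cos θ, Real.sin θ] : EuclideanSpace ℝ (Fin 2)) 0 = Real.cos θ := rfl
  have h1 : (WithLp.toLp 2 ![Real.cos θ, Real.sin θ] : EuclideanSpace ℝ (Fin 2)) 1 = Real.sin θ := rfl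
  rw [h0, h1, Complex.real_smul, Complex.exp_mul_I, Complex.ofReal_cos, Complex.ofReal_sin]

lemma sector_eq_preimage (k j : ℕ) :
    sector k j = planeEquiv ⁻¹' cW ((j : ℝ) * π / k) (((j : ℝ) + 1) * π / k) := by
  ext x
  simp only [sector, cW, Set.mem_setOf_eq, Set.mem_preimage]
  constructor
  · rintro ⟨r, θ, hr, h1, h2, rfl⟩
    exact ⟨r, θ, hr, h1, h2, planeEquiv_smul_vec r θ⟩
  · rintro ⟨r, θ, hr, h1, h2, hx⟩
    refine ⟨r, θ, hr, h1, h2, ?_⟩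
    apply planeEquiv.injective
    rw [hx, planeEquiv_smul_vec]

lemma volume_sector_eq (k j : ℕ) (hk : 0 < k) (a : EuclideanSpace ℝ (Fin 2)) (ρ : ℝ) :
    volume (sector k j ∩ closedBall a ρ)
      = volume (cW ((j : ℝ) * π / k) (((j : ℝ) + 1) * π / k) ∩ closedBall (planeEquiv a) ρ) := by
  have hπ := Real.pi_pos
  have hk1 : (1 : ℝ) ≤ (k : ℝ) := by exact_mod_cast hk
  have hwidth : ((j : ℝ) + 1) * π / k - (j : ℝ) * π / k ≤ π := by
    rw [show ((j : ℝ) + 1) * π / k - (j : ℝ) * π / k = π / k by field_simp; ring]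
    rw [div_le_iff₀ (by linarith)]
    nlinarith
  have hball : closedBall a ρ = planeEquiv ⁻¹' closedBall (planeEquiv a) ρ := by
    ext x
    simp only [Set.mem_preimage, mem_closedBall]
    rw [LinearIsometryEquiv.dist_map]
  rw [sector_eq_preimage, hball, ← Set.preimage_inter]
  exact planeEquiv.measurePreserving.measure_preimage
    (((measurableSet_cW hwidth).inter measurableSet_closedBall).nullMeasurableSet)

lemma pair_integral {b : ℂ} {ρ : ℝ} (hb : ‖b‖ ≤ ρ) (c w : ℝ) :
    (∫ θ in c..(c + w), tfun b ρ θ ^ 2 / 2) + (∫ θ in c..(c + w), tfun b ρ (θ + π) ^ 2 / 2)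
      = ρ ^ 2 * w + (b.re ^ 2 - b.im ^ 2) * ((Real.sin (2 * (c + w)) - Real.sin (2 * c)) / 2)
        + (2 * b.re * b.im) * ((Real.cos (2 * c) - Real.cos (2 * (c + w))) / 2) := by
  have habs2 : ‖b‖ ^ 2 = b.re ^ 2 + b.im ^ 2 := by
    rw [Complex.sq_norm, Complex.normSq_apply]; ring
  have hfun : ∀ θ : ℝ, tfun b ρ θ ^ 2 / 2 + tfun b ρ (θ + π) ^ 2 / 2
      = ρ ^ 2 + (b.re ^ 2 - b.im ^ 2) * Real.cos (2 * θ)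
        + (2 * b.re * b.im) * Real.sin (2 * θ) := by
    intro θ
    have h1 := tfun_sq_add_antipodal hb θ
    unfold cfun at h1
    have hpyth := Real.sin_sq_add_cos_sq θ
    rw [Real.cos_two_mul, Real.sin_two_mul]
    linear_combination h1 / 2 - habs2 + 2 * b.im ^ 2 * hpyth
  have hint1 : ∀ θ : ℝ, tfun b ρ θ ^ 2 / 2 + tfun b ρ (θ + π) ^ 2 / 2 = _ := hfun
  have hcont2 : Continuous fun θ : ℝ => tfun b ρ (θ + π) ^ 2 / 2 := by
    apply Continuous.div_const
    apply Continuous.pow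
    exact (continuous_tfun b ρ).comp (continuous_id.add continuous_const)
  rw [← intervalIntegral.integral_add (f := fun θ => tfun b ρ θ ^ 2 / 2)
      (g := fun θ => tfun b ρ (θ + π) ^ 2 / 2)
      ((((continuous_tfun b ρ).pow 2).div_const 2).intervalIntegrable _ _)
      (hcont2.intervalIntegrable _ _)]
  rw [intervalIntegral.integral_congr (g := fun θ => ρ ^ 2
      + (b.re ^ 2 - b.im ^ 2) * Real.cos (2 * θ) + (2 * b.re * b.im) * Real.sin (2 * θ))
      (fun θ _ => hfun θ)]
  have hcos2 : Continuous fun θ : ℝ => Real.cos (2 * θ) :=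
    Real.continuous_cos.comp (continuous_const.mul continuous_id)
  have hsin2 : Continuous fun θ : ℝ => Real.sin (2 * θ) :=
    Real.continuous_sin.comp (continuous_const.mul continuous_id)
  rw [intervalIntegral.integral_add
      (f := fun θ => ρ ^ 2 + (b.re ^ 2 - b.im ^ 2) * Real.cos (2 * θ))
      (g := fun θ => (2 * b.re * b.im) * Real.sin (2 * θ)) ((intervalIntegrable_const (c := ρ ^ 2)).add
      ((continuous_const.mul hcos2).intervalIntegrable _ _))
      ((continuous_const.mul hsin2).intervalIntegrable _ _),
    intervalIntegral.integral_add (f := fun _ => ρ ^ 2)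
      (g := fun θ => (b.re ^ 2 - b.im ^ 2) * Real.cos (2 * θ))
      (intervalIntegrable_const (c := ρ ^ 2))
      ((continuous_const.mul hcos2).intervalIntegrable _ _)]
  rw [intervalIntegral.integral_const, intervalIntegral.integral_const_mul,
    intervalIntegral.integral_const_mul]
  have hc2 : (∫ θ in c..(c + w), Real.cos (2 * θ))
      = (Real.sin (2 * (c + w)) - Real.sin (2 * c)) / 2 := by
    rw [intervalIntegral.integral_comp_mul_left Real.cos two_ne_zero, integral_cos]
    simp [smul_eq_mul]
    ring
  have hs2 : (∫ θ in c..(c + w), Real.sin (2 * θ))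
      = (Real.cos (2 * c) - Real.cos (2 * (c + w))) / 2 := by
    rw [intervalIntegral.integral_comp_mul_left Real.sin two_ne_zero, integral_sin]
    simp [smul_eq_mul]
    ring
  rw [hc2, hs2]
  simp [smul_eq_mul]
  ring

end PizzaAux

open PizzaAux

/-- Sharing pizza among `p` people with the arrangement `I₂(k)`, `p ∣ k`, `p < k`: if the
pizza is the disc of radius `ρ` centered at `a` with `‖a‖ ≤ ρ` (the disc `K + a` where
`K = B(0,ρ)`), then for every residue `0 ≤ r < p`, the total area of the slices
`T_{r+pi}`, `0 ≤ i < 2k/p`, equals `Area(K)/p = πρ²/p`. -/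
theorem pizza_sharing (k p : ℕ) (hk : 0 < k) (hp : 0 < p) (hpk : p < k) (hdvd : p ∣ k)
    (ρ : ℝ) (hρ : 0 ≤ ρ) (a : EuclideanSpace ℝ (Fin 2)) (ha : ‖a‖ ≤ ρ)
    (r : ℕ) (hr : r < p) :
    ∑ i ∈ Finset.range (2 * k / p),
        (volume (sector k (r + p * i) ∩ closedBall a ρ)).toReal
      = π * ρ ^ 2 / p := by
  classical
  obtain ⟨m, hm⟩ := hdvd
  have hπ := Real.pi_pos
  have hm2 : 2 ≤ m := by
    rcases Nat.lt_or_ge m 2 with h | h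
    · interval_cases m
      · simp at hm; omega
      · simp at hm; omega
    · exact h
  have hsum_range : 2 * k / p = 2 * m := by
    rw [hm, show 2 * (p * m) = p * (2 * m) by ring, Nat.mul_div_cancel_left _ hp]
  set b : ℂ := planeEquiv a with hbdef
  have hb : ‖b‖ ≤ ρ := by
    have h1 : ‖b‖ = ‖b‖ := rfl
    rw [h1, hbdef, LinearIsometryEquiv.norm_map]
    exact ha
  have hkR : (0 : ℝ) < k := by exact_mod_cast hk
  have hpR : (0 : ℝ) < p := by exact_mod_cast hp
  have hmR : (0 : ℝ) < m := by exact_mod_cast (by omega : 0 < m)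
  have hkpm : (k : ℝ) = p * m := by exact_mod_cast hm
  have hk2 : (2 : ℝ) ≤ k := by exact_mod_cast (by omega : 2 ≤ k)
  have hslice : ∀ j : ℕ, (volume (sector k j ∩ closedBall a ρ)).toReal
      = ∫ θ in ((j : ℝ) * π / k)..(((j : ℝ) + 1) * π / k), tfun b ρ θ ^ 2 / 2 := by
    intro j
    rw [volume_sector_eq k j hk a ρ, ← hbdef]
    have hd : ((j : ℝ) + 1) * π / k - (j : ℝ) * π / k = π / k := by
      field_simp
      ring
    have h1 : (j : ℝ) * π / k < ((j : ℝ) + 1) * π / k := by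
      have h2 : 0 < π / (k : ℝ) := by positivity
      linarith
    have h2 : ((j : ℝ) + 1) * π / k - (j : ℝ) * π / k ≤ π / 2 := by
      rw [hd, div_le_div_iff₀ hkR two_pos]
      nlinarith
    exact toReal_volume_cW_inter_closedBall h1 h2 hb
  set x0 : ℝ := 2 * (r : ℝ) * π / k with hx0
  set x1 : ℝ := 2 * (r : ℝ) * π / k + 2 * π / k with hx1
  have hpair : ∀ i ∈ Finset.range m,
      (volume (sector k (r + p * i) ∩ closedBall a ρ)).toReal
        + (volume (sector k (r + p * (m + i)) ∩ closedBall a ρ)).toReal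
      = ρ ^ 2 * (π / k)
        + (b.re ^ 2 - b.im ^ 2)
            * ((Real.sin (x1 + i * (2 * π / m)) - Real.sin (x0 + i * (2 * π / m))) / 2)
        + (2 * b.re * b.im)
            * ((Real.cos (x0 + i * (2 * π / m)) - Real.cos (x1 + i * (2 * π / m))) / 2) := by
    intro i _
    rw [hslice (r + p * i), hslice (r + p * (m + i))]
    set c : ℝ := ((r : ℝ) + p * i) * π / k with hc
    have e1 : ((r + p * i : ℕ) : ℝ) * π / k = c := by rw [hc]; push_cast; ring
    have e2 : (((r + p * i : ℕ) : ℝ) + 1) * π / k = c + π / k := by rw [hc]; push_cast; ring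
    have e3 : ((r + p * (m + i) : ℕ) : ℝ) * π / k = c + π := by
      rw [hc, hkpm]
      push_cast
      field_simp
      ring
    have e4 : (((r + p * (m + i) : ℕ) : ℝ) + 1) * π / k = c + π / k + π := by
      rw [hc, hkpm]
      push_cast
      field_simp
      ring
    rw [e1, e2, e3, e4]
    rw [← intervalIntegral.integral_comp_add_right (fun θ => tfun b ρ θ ^ 2 / 2) π]
    rw [pair_integral hb c (π / k)]
    have harg0 : 2 * c = x0 + i * (2 * π / m) := by
      rw [hc, hx0, hkpm]
      field_simp
    have harg1 : 2 * (c + π / k) = x1 + i * (2 * π / m) := by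
      rw [hc, hx1, hkpm]
      field_simp
      ring
    rw [harg0, harg1]
  rw [hsum_range, two_mul, Finset.sum_range_add, ← Finset.sum_add_distrib]
  rw [Finset.sum_congr rfl hpair]
  have hsplit : ∀ i : ℕ, ρ ^ 2 * (π / k)
        + (b.re ^ 2 - b.im ^ 2)
            * ((Real.sin (x1 + i * (2 * π / m)) - Real.sin (x0 + i * (2 * π / m))) / 2)
        + (2 * b.re * b.im)
            * ((Real.cos (x0 + i * (2 * π / m)) - Real.cos (x1 + i * (2 * π / m))) / 2)
      = ρ ^ 2 * (π / k)
        + ((b.re ^ 2 - b.im ^ 2) / 2 * Real.sin (x1 + i * (2 * π / m))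
        - (b.re ^ 2 - b.im ^ 2) / 2 * Real.sin (x0 + i * (2 * π / m))
        + (b.re * b.im) * Real.cos (x0 + i * (2 * π / m))
        - (b.re * b.im) * Real.cos (x1 + i * (2 * π / m))) := fun i => by ring
  rw [Finset.sum_congr rfl (fun i _ => hsplit i)]
  rw [Finset.sum_add_distrib]
  have hz1 := sum_sin_eq_zero hm2 x0
  have hz2 := sum_sin_eq_zero hm2 x1
  have hz3 := sum_cos_eq_zero hm2 x0
  have hz4 := sum_cos_eq_zero hm2 x1
  have hzero : ∑ i ∈ Finset.range m,
      ((b.re ^ 2 - b.im ^ 2) / 2 * Real.sin (x1 + i * (2 * π / m))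
        - (b.re ^ 2 - b.im ^ 2) / 2 * Real.sin (x0 + i * (2 * π / m))
        + (b.re * b.im) * Real.cos (x0 + i * (2 * π / m))
        - (b.re * b.im) * Real.cos (x1 + i * (2 * π / m))) = 0 := by
    rw [Finset.sum_sub_distrib, Finset.sum_add_distrib, Finset.sum_sub_distrib,
      ← Finset.mul_sum, ← Finset.mul_sum, ← Finset.mul_sum, ← Finset.mul_sum,
      hz1, hz2, hz3, hz4]
    ring
  rw [hzero, add_zero, Finset.sum_const, Finset.card_range, nsmul_eq_mul]
  rw [hkpm]
  field_simp
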